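/- arXiv:2512.24972 — 2 statements merged into one kernel-verified Lean document; each statement's English description precedes it below -/
import Mathlib

section
/- Let $0<\eta<1$ and let $\mathcal{S}$ be an $\eta$-sparse family of dyadic cubes contained in $[0,1]^n$, decomposed into layers $\mathcal{S}^{(0)}, \mathcal{S}^{(1)}, \dots$ where $\mathcal{S}^{(0)}=\{[0,1]^n\}$ and $\mathcal{S}^{(j+1)}$ consists of the maximal cubes of $\mathcal{S}\setminus(\mathcal{S}^{(0)}\cup\cdots\cup\mathcal{S}^{(j)})$. Then for every $j\ge 0$, $\sum_{Q\in \mathcal{S}^{(j)}} |Q| \le C (1-\eta)^j$ for a constant $C$ depending only on $\eta$. -/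
open MeasureTheory

/-- for an `η`-sparse family of dyadic cubes in `[0,1]^n`, organized into
layers `S 0, S 1, …` where `S 0 = {[0,1]^n}`, each layer (for `j ≥ 1`) consists of
pairwise disjoint cubes, and every cube of layer `j+1` is strictly contained in a cube
of layer `j`, the total volume of the `j`-th layer decays like `(1-η)^j`. -/
theorem stmt_3 (n : ℕ) (hn : 1 ≤ n) (η : ℝ) (hη0 : 0 < η) (hη1 : η < 1)
    (S : ℕ → Set (Set (Fin n → ℝ)))
    (hcount : ∀ j, (S j).Countable)
    (hmeas : ∀ j, ∀ Q ∈ S j, MeasurableSet Q)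
    (h0 : S 0 = {Set.Icc (0 : Fin n → ℝ) 1})
    (hsub : ∀ j, ∀ Q ∈ S (j + 1), ∃ R ∈ S j, Q ⊆ R ∧ Q ≠ R)
    (hdisj : ∀ j, (S j).Pairwise fun Q R => Disjoint Q R)
    (E : Set (Fin n → ℝ) → Set (Fin n → ℝ))
    (hE : ∀ Q ∈ ⋃ j, S j, E Q ⊆ Q ∧ MeasurableSet (E Q) ∧
      ENNReal.ofReal η * volume Q ≤ volume (E Q))
    (hEdisj : ∀ Q ∈ ⋃ j, S j, ∀ R ∈ ⋃ j, S j, Q ≠ R → Disjoint (E Q) (E R)) :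
    ∃ C > 0, ∀ j : ℕ,
      ∑' Q : S j, volume (Q : Set (Fin n → ℝ)) ≤ ENNReal.ofReal (C * (1 - η) ^ j) := by
  classical
  have hmemU : ∀ j, ∀ Q ∈ S j, Q ∈ ⋃ i, S i := fun j Q hQ => Set.mem_iUnion.2 ⟨j, hQ⟩
  -- strict ancestors
  have hchain : ∀ k j, ∀ Q ∈ S (j + (k + 1)), ∃ R ∈ S j, Q ⊆ R ∧ Q ≠ R := by
    intro k
    induction k with
    | zero => intro j Q hQ; exact hsub j Q hQ
    | succ k ih =>
      intro j Q hQ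
      have hQ' : Q ∈ S ((j + 1) + (k + 1)) := by
        have : (j + 1) + (k + 1) = j + (k + 1 + 1) := by omega
        rw [this]; exact hQ
      obtain ⟨R, hR, hQR, hne⟩ := ih (j + 1) Q hQ'
      obtain ⟨R', hR', hRR', hne'⟩ := hsub j R hR
      refine ⟨R', hR', hQR.trans hRR', ?_⟩
      rintro rfl
      exact hne (subset_antisymm hQR hRR')
  have hanc : ∀ k j, ∀ Q ∈ S (j + k), ∃ R ∈ S j, Q ⊆ R := by
    intro k
    cases k with
    | zero => intro j Q hQ; exact ⟨Q, hQ, subset_rfl⟩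
    | succ k => intro j Q hQ; obtain ⟨R, hR, h1, _⟩ := hchain k j Q hQ; exact ⟨R, hR, h1⟩
  -- duplicates across layers are empty
  have hdup : ∀ j k Q, Q ∈ S j → Q ∈ S (j + (k + 1)) → Q = ∅ := by
    intro j k Q h1 h2
    obtain ⟨R, hR, hQR, hne⟩ := hchain k j Q h2
    have hd : Disjoint Q R := hdisj j h1 hR hne
    simpa using hd.eq_bot_of_le hQR
  set a : ℕ → ENNReal := fun j => ∑' Q : S j, volume (Q : Set (Fin n → ℝ)) with ha
  set T : ℕ → ENNReal := fun j => ∑' k, a (j + k) with hT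
  have hUnion : ∀ j, volume (⋃₀ S j) = a j := fun j =>
    measure_sUnion (hcount j) (hdisj j) (hmeas j)
  -- the key inequality: η * T j ≤ a j
  have hkey : ∀ j, ENNReal.ofReal η * T j ≤ a j := by
    intro j
    haveI : ∀ k : ℕ, Countable (S (j + k) : Set (Set (Fin n → ℝ))) :=
      fun k => (hcount (j + k)).to_subtype
    have hmem : ∀ (p : Σ k : ℕ, (S (j + k) : Set (Set (Fin n → ℝ)))),
        (p.2 : Set (Fin n → ℝ)) ∈ ⋃ i, S i := fun p => hmemU _ _ p.2.2
    calc ENNReal.ofReal η * T j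
        = ∑' k, ∑' Q : S (j + k), ENNReal.ofReal η * volume (Q : Set (Fin n → ℝ)) := by
          rw [hT, ← ENNReal.tsum_mul_left]
          exact tsum_congr fun k => by rw [ha, ← ENNReal.tsum_mul_left]
      _ = ∑' (p : Σ k : ℕ, (S (j + k) : Set (Set (Fin n → ℝ)))),
            ENNReal.ofReal η * volume (p.2 : Set (Fin n → ℝ)) :=
          (ENNReal.tsum_sigma fun k (Q : (S (j + k) : Set (Set (Fin n → ℝ)))) =>
            ENNReal.ofReal η * volume (Q : Set (Fin n → ℝ))).symm
      _ ≤ ∑' (p : Σ k : ℕ, (S (j + k) : Set (Set (Fin n → ℝ)))),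
            volume (E (p.2 : Set (Fin n → ℝ))) :=
          ENNReal.tsum_le_tsum fun p => (hE _ (hmem p)).2.2
      _ = volume (⋃ (p : Σ k : ℕ, (S (j + k) : Set (Set (Fin n → ℝ)))),
            E (p.2 : Set (Fin n → ℝ))) := by
          refine (measure_iUnion ?_ fun p => (hE _ (hmem p)).2.1).symm
          intro p q hpq
          by_cases hval : (p.2 : Set (Fin n → ℝ)) = (q.2 : Set (Fin n → ℝ))
          · -- duplicate: the cube is empty
            have hk : p.1 ≠ q.1 := by
              rintro hk
              apply hpq
              obtain ⟨k1, Q1⟩ := p; obtain ⟨k2, Q2⟩ := q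
              simp only at hk
              subst hk
              exact congrArg _ (Subtype.ext hval)
            have hempty : (p.2 : Set (Fin n → ℝ)) = ∅ := by
              rcases lt_or_gt_of_ne hk with h | h
              · obtain ⟨m, hm⟩ : ∃ m, q.1 = p.1 + (m + 1) := ⟨q.1 - p.1 - 1, by omega⟩
                refine hdup (j + p.1) m _ p.2.2 ?_
                have : j + q.1 = j + p.1 + (m + 1) := by omega
                rw [← this, hval]; exact q.2.2
              · obtain ⟨m, hm⟩ : ∃ m, p.1 = q.1 + (m + 1) := ⟨p.1 - q.1 - 1, by omega⟩
                rw [hval]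
                refine hdup (j + q.1) m _ q.2.2 ?_
                have : j + p.1 = j + q.1 + (m + 1) := by omega
                rw [← this, ← hval]; exact p.2.2
            have h1 : E (p.2 : Set (Fin n → ℝ)) = ∅ :=
              Set.subset_empty_iff.1 (hempty ▸ (hE _ (hmem p)).1)
            simp [Function.onFun, h1]
          · exact hEdisj _ (hmem p) _ (hmem q) hval
      _ ≤ volume (⋃₀ S j) := by
          refine measure_mono ?_
          rintro x hx
          simp only [Set.mem_iUnion] at hx
          obtain ⟨p, hp⟩ := hx
          obtain ⟨R, hR, hQR⟩ := hanc p.1 j _ p.2.2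
          exact ⟨R, hR, hQR ((hE _ (hmem p)).1 hp)⟩
      _ = a j := hUnion j
  -- splitting the tail sum
  have hsplit : ∀ j, T j = a j + T (j + 1) := by
    intro j
    rw [hT]
    simp only
    rw [tsum_eq_zero_add' (f := fun k => a (j + k)) ENNReal.summable]
    simp only [add_zero]
    congr 1
    exact tsum_congr fun k => by rw [show j + (k + 1) = (j + 1) + k by omega]
  -- base: a 0 = 1
  have ha0 : a 0 = 1 := by
    rw [← hUnion 0, h0, Set.sUnion_singleton, Real.volume_Icc_pi]
    simp
  have hη0e : (ENNReal.ofReal η) ≠ 0 := by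
    simp [ENNReal.ofReal_eq_zero, not_le, hη0]
  -- T 0 is finite
  have hT0 : T 0 ≤ (ENNReal.ofReal η)⁻¹ := by
    have h1 : ENNReal.ofReal η * T 0 ≤ 1 := by
      calc ENNReal.ofReal η * T 0 ≤ a 0 := hkey 0
        _ = 1 := ha0
    rw [mul_comm, ← ENNReal.le_div_iff_mul_le (Or.inl hη0e) (Or.inl ENNReal.ofReal_ne_top)] at h1
    simpa [one_div] using h1
  -- one-step decay
  have hstep : ∀ j, T j ≠ ⊤ → T (j + 1) ≤ ENNReal.ofReal (1 - η) * T j := by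
    intro j hfin
    have hadd : ENNReal.ofReal (1 - η) + ENNReal.ofReal η = 1 := by
      rw [← ENNReal.ofReal_add (by linarith) hη0.le]
      norm_num
    have h1 : T (j + 1) + ENNReal.ofReal η * T j ≤
        ENNReal.ofReal (1 - η) * T j + ENNReal.ofReal η * T j := by
      calc T (j + 1) + ENNReal.ofReal η * T j
          ≤ T (j + 1) + a j := add_le_add_right (hkey j) _
        _ = T j := by rw [hsplit j, add_comm]
        _ = (ENNReal.ofReal (1 - η) + ENNReal.ofReal η) * T j := by rw [hadd, one_mul]
        _ = ENNReal.ofReal (1 - η) * T j + ENNReal.ofReal η * T j := by rw [add_mul]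
    exact (ENNReal.add_le_add_iff_right (ENNReal.mul_ne_top ENNReal.ofReal_ne_top hfin)).1 h1
  -- geometric bound by induction
  have hgeom : ∀ j, T j ≤ ENNReal.ofReal (1 - η) ^ j * (ENNReal.ofReal η)⁻¹ := by
    intro j
    induction j with
    | zero => simpa using hT0
    | succ j ih =>
      have hfinrhs : ENNReal.ofReal (1 - η) ^ j * (ENNReal.ofReal η)⁻¹ ≠ ⊤ :=
        ENNReal.mul_ne_top (ENNReal.pow_ne_top ENNReal.ofReal_ne_top)
          (ENNReal.inv_ne_top.2 hη0e)
      have hfin : T j ≠ ⊤ := fun h => hfinrhs (top_le_iff.1 (h ▸ ih))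
      calc T (j + 1) ≤ ENNReal.ofReal (1 - η) * T j := hstep j hfin
        _ ≤ ENNReal.ofReal (1 - η) * (ENNReal.ofReal (1 - η) ^ j * (ENNReal.ofReal η)⁻¹) :=
            mul_le_mul_right ih _
        _ = ENNReal.ofReal (1 - η) ^ (j + 1) * (ENNReal.ofReal η)⁻¹ := by
            rw [pow_succ]; ring
  refine ⟨η⁻¹, by positivity, fun j => ?_⟩
  have h1 : a j ≤ T j := by
    have := ENNReal.le_tsum (f := fun k => a (j + k)) 0
    simpa using this
  calc (∑' Q : S j, volume (Q : Set (Fin n → ℝ))) = a j := rfl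
    _ ≤ T j := h1
    _ ≤ ENNReal.ofReal (1 - η) ^ j * (ENNReal.ofReal η)⁻¹ := hgeom j
    _ = ENNReal.ofReal (η⁻¹ * (1 - η) ^ j) := by
        rw [ENNReal.ofReal_mul (by positivity), ← ENNReal.ofReal_pow (by linarith),
          ← ENNReal.ofReal_inv_of_pos hη0, mul_comm]
end

section
/- Let $1<t<3/2$, $n=1$ setting on the disc: for every $1\le p,q\le\infty$ with $\frac1q-\frac1p>2t-2$, the operator $T f(z)=\sum_{j\ge0} A_j f(z)$, where $A_j f(z)=\sum_{|I|=2^{-j}}\mathbf{1}_{Q_I}(z)|Q_I|^{-t}\int_{Q_I}|f|\,dA$ over a dyadic system on the circle, is bounded from $L^p(\mathbb{D})$ to $L^q(\mathbb{D})$. Specifically, with the bounds $\|A_j\|_{L^p\to L^q}\le C 2^{j(2(t-1)+\frac{p-q}{pq}\log_2(1/2))}$ one has geometric summability whenever $2(t-1) < \frac1q-\frac1p$. -/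
open MeasureTheory ENNReal NNReal

lemma my_rpow_le_rpow_of_nonpos {x y : ℝ≥0∞} {e : ℝ} (hx : x ≤ y) (he : e ≤ 0) :
    y ^ e ≤ x ^ e := by
  calc y ^ e = (y ^ (-e))⁻¹ := by rw [← ENNReal.rpow_neg, neg_neg]
    _ ≤ (x ^ (-e))⁻¹ := ENNReal.inv_le_inv.mpr (ENNReal.rpow_le_rpow hx (neg_nonneg.mpr he))
    _ = x ^ e := by rw [← ENNReal.rpow_neg, neg_neg]

lemma my_rpow_rpow_cancel {x : ℝ≥0∞} {a : ℝ} (ha : a ≠ 0) : (x ^ a) ^ (1/a) = x := by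
  rw [← ENNReal.rpow_mul, mul_one_div_cancel ha, ENNReal.rpow_one]

lemma my_rpow_rpow_cancel' {x : ℝ≥0∞} {a : ℝ} (ha : a ≠ 0) : (x ^ (1/a)) ^ a = x := by
  rw [← ENNReal.rpow_mul, one_div_mul_cancel ha, ENNReal.rpow_one]

lemma my_rpow_ne_top {x : ℝ≥0∞} (h0 : x ≠ 0) (ht : x ≠ ⊤) (y : ℝ) : x ^ y ≠ ⊤ := by
  simp [ENNReal.rpow_eq_top_iff, h0, ht]

/-- strong `L^p(𝔻) → L^q(𝔻)` boundedness of the full hypersingular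
dyadic operator `T = ∑_j A_j` on the unit disc in the off-critical regime
`1/q - 1/p > 2t - 2`, where `A_j` sums over the generation-`j` Carleson boxes. -/
theorem stmt_19 (t : ℝ) (ht1 : 1 < t) (ht2 : t < 3/2)
    (c₁ c₂ : ℝ) (hc₁ : 0 < c₁) (hc₂ : 0 < c₂)
    (p q : ℝ≥0∞) (hp : 1 ≤ p) (hq : 1 ≤ q)
    (hpq : 1 / p + ENNReal.ofReal (2 * t - 2) < 1 / q)
    (Q : (j : ℕ) → Fin (2 ^ j) → Set ℂ)
    (hmeas : ∀ (j : ℕ) (i : Fin (2 ^ j)), MeasurableSet (Q j i))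
    (hdisj : ∀ j, Pairwise fun i i' => Disjoint (Q j i) (Q j i'))
    (hvol : ∀ (j : ℕ) (i : Fin (2 ^ j)), ENNReal.ofReal (c₁ * 2 ^ (-2 * (j : ℝ))) ≤ volume (Q j i) ∧
      volume (Q j i) ≤ ENNReal.ofReal (c₂ * 2 ^ (-2 * (j : ℝ))))
    (hunion : ∀ j, (⋃ i, Q j i) = {z : ℂ | 1 - 2 ^ (-(j : ℝ)) ≤ ‖z‖ ∧ ‖z‖ < 1}) :
    ∃ C > 0, ∀ f : ℂ → ℝ,
      MemLp f p (volume.restrict {z : ℂ | ‖z‖ < 1}) →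
      eLpNorm
          (fun z => ∑' j : ℕ, ∑ i : Fin (2 ^ j),
            Set.indicator (Q j i)
              (fun _ => (volume (Q j i)).toReal ^ (-t) * ∫ w in Q j i, |f w|) z)
          q (volume.restrict {z : ℂ | ‖z‖ < 1})
        ≤ ENNReal.ofReal C * eLpNorm f p (volume.restrict {z : ℂ | ‖z‖ < 1}) := by
  classical
  set D : Set ℂ := {z : ℂ | ‖z‖ < 1} with hD
  set μ : Measure ℂ := volume.restrict D with hμ
  have hq0 : q ≠ 0 := (zero_lt_one.trans_le hq).ne'
  have hp0 : p ≠ 0 := (zero_lt_one.trans_le hp).ne'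
  have hqt : q ≠ ⊤ := by
    intro h
    rw [h] at hpq
    simp at hpq
  set qr : ℝ := q.toReal with hqrdef
  have hqr0 : 0 < qr := ENNReal.toReal_pos hq0 hqt
  have hqr0' : qr ≠ 0 := hqr0.ne'
  set α : ℝ := p.toReal⁻¹ with hαdef
  have hα0 : 0 ≤ α := inv_nonneg.mpr ENNReal.toReal_nonneg
  have hkey : α + (2*t - 2) < 1/qr := by
    have hq1 : (1/q) ≠ ⊤ := by
      rw [one_div]
      exact ENNReal.inv_ne_top.mpr hq0
    have h1p : (1/p) + ENNReal.ofReal (2*t-2) ≠ ⊤ := ne_top_of_lt (hpq.trans_le le_top)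
    have h1p' : (1/p) ≠ ⊤ := fun h => h1p (by rw [h]; simp)
    have h2 := (ENNReal.toReal_lt_toReal h1p hq1).mpr hpq
    rw [ENNReal.toReal_add h1p' ENNReal.ofReal_ne_top, ENNReal.toReal_ofReal (by linarith),
      one_div, one_div, ENNReal.toReal_inv, ENNReal.toReal_inv] at h2
    rw [one_div]
    exact h2
  set e : ℝ := (1 - α - t) * qr + 1 with hedef
  set γ : ℝ := 2*t - 2 + α - 1/qr with hγdef
  have hγ : γ < 0 := by rw [hγdef]; linarith
  set K : ℝ≥0∞ := ENNReal.ofReal c₁ ^ e + ENNReal.ofReal c₂ ^ e with hKdef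
  have hK0 : K ≠ 0 := by
    have : (0:ℝ≥0∞) < ENNReal.ofReal c₁ ^ e :=
      ENNReal.rpow_pos (ENNReal.ofReal_pos.mpr hc₁) ENNReal.ofReal_ne_top
    exact (this.trans_le le_self_add).ne'
  have hKt : K ≠ ⊤ :=
    ENNReal.add_ne_top.mpr ⟨my_rpow_ne_top (ENNReal.ofReal_pos.mpr hc₁).ne' ENNReal.ofReal_ne_top e,
      my_rpow_ne_top (ENNReal.ofReal_pos.mpr hc₂).ne' ENNReal.ofReal_ne_top e⟩
  set Kr : ℝ≥0∞ := K ^ (1/qr) with hKrdef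
  set ρ : ℝ≥0∞ := (2:ℝ≥0∞) ^ γ with hρdef
  have hρ1 : ρ < 1 := ENNReal.rpow_lt_one_of_one_lt_of_neg (by norm_num) hγ
  set C' : ℝ≥0∞ := Kr * (1 - ρ)⁻¹ with hC'def
  have hC'0 : C' ≠ 0 := by
    apply mul_ne_zero
    · exact (ENNReal.rpow_pos (pos_iff_ne_zero.mpr hK0) hKt).ne'
    · exact ENNReal.inv_ne_zero.mpr (ne_top_of_le_ne_top ENNReal.one_ne_top tsub_le_self)
  have hC't : C' ≠ ⊤ := by
    apply ENNReal.mul_ne_top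
    · exact my_rpow_ne_top hK0 hKt _
    · exact ENNReal.inv_ne_top.mpr (tsub_pos_of_lt hρ1).ne'
  refine ⟨C'.toReal, ENNReal.toReal_pos hC'0 hC't, ?_⟩
  intro f hf
  rw [ENNReal.ofReal_toReal hC't]
  set L : ℝ≥0∞ := eLpNorm f p μ with hLdef
  have hQD : ∀ j (i : Fin (2^j)), Q j i ⊆ D := by
    intro j i z hz
    have : z ∈ ⋃ i, Q j i := Set.mem_iUnion.mpr ⟨i, hz⟩
    rw [hunion j] at this
    exact this.2
  have hμQD : ∀ j (i : Fin (2^j)), μ (Q j i) = volume (Q j i) := by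
    intro j i
    rw [hμ, Measure.restrict_apply (hmeas j i), Set.inter_eq_self_of_subset_left (hQD j i)]
  have hV0 : ∀ j (i : Fin (2^j)), volume (Q j i) ≠ 0 := by
    intro j i
    have : (0:ℝ≥0∞) < ENNReal.ofReal (c₁ * 2 ^ (-2 * (j:ℝ))) :=
      ENNReal.ofReal_pos.mpr (mul_pos hc₁ (Real.rpow_pos_of_pos two_pos _))
    exact (this.trans_le (hvol j i).1).ne'
  have hVt : ∀ j (i : Fin (2^j)), volume (Q j i) ≠ ⊤ :=
    fun j i => ((hvol j i).2.trans_lt ENNReal.ofReal_lt_top).ne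
  set c : (j : ℕ) → Fin (2^j) → ℝ :=
    fun j i => (volume (Q j i)).toReal ^ (-t) * ∫ w in Q j i, |f w| with hcdef
  have hc0 : ∀ j i, 0 ≤ c j i := fun j i =>
    mul_nonneg (Real.rpow_nonneg ENNReal.toReal_nonneg _) (integral_nonneg fun w => abs_nonneg _)
  set g : ℕ → ℂ → ℝ := fun j z => ∑ i, Set.indicator (Q j i) (fun _ => c j i) z with hgdef
  have hg0 : ∀ j z, 0 ≤ g j z := fun j z =>
    Finset.sum_nonneg fun i _ => Set.indicator_nonneg (fun _ _ => hc0 j i) z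
  have hgmeas : ∀ j, Measurable (g j) := fun j =>
    Finset.measurable_sum _ fun i _ => measurable_const.indicator (hmeas j i)
  -- STEP 2
  have step2 : ∀ j : ℕ, eLpNorm (g j) q μ ≤ Kr * ρ ^ j * L := by
    intro j
    set V : Fin (2^j) → ℝ≥0∞ := fun i => volume (Q j i) with hVdef
    set X : Fin (2^j) → ℝ≥0∞ := fun i => eLpNorm f p (volume.restrict (Q j i)) with hXdef
    set Bj : ℝ≥0∞ := ENNReal.ofReal ((2:ℝ) ^ (-2*(j:ℝ))) with hBjdef
    have hBj0 : Bj ≠ 0 := (ENNReal.ofReal_pos.mpr (Real.rpow_pos_of_pos two_pos _)).ne'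
    have hBjt : Bj ≠ ⊤ := ENNReal.ofReal_ne_top
    -- pointwise identity
    have hpt : ∀ z, (‖g j z‖₊ : ℝ≥0∞) ^ qr
        = ∑ i, Set.indicator (Q j i) (fun _ => ENNReal.ofReal (c j i) ^ qr) z := by
      intro z
      by_cases hz : ∃ i, z ∈ Q j i
      · obtain ⟨i₀, hi₀⟩ := hz
        have hgz : g j z = c j i₀ := by
          rw [hgdef]
          refine (Finset.sum_eq_single_of_mem i₀ (Finset.mem_univ _)
            (fun i _ hne => Set.indicator_of_notMem
              (fun hzi => (hdisj j hne).le_bot ⟨hzi, hi₀⟩) _)).trans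
            (Set.indicator_of_mem hi₀ _)
        rw [hgz, ← enorm_eq_nnnorm, Real.enorm_eq_ofReal (hc0 j i₀)]
        symm
        refine (Finset.sum_eq_single_of_mem i₀ (Finset.mem_univ _) ?_).trans
          (Set.indicator_of_mem hi₀ _)
        intro i _ hne
        exact Set.indicator_of_notMem (fun hzi => (hdisj j hne).le_bot ⟨hzi, hi₀⟩) _
      · push_neg at hz
        have hgz : g j z = 0 := by
          rw [hgdef]
          exact Finset.sum_eq_zero fun i _ => Set.indicator_of_notMem (hz i) _
        rw [hgz]
        rw [Finset.sum_eq_zero fun i _ => Set.indicator_of_notMem (hz i) _]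
        simp [ENNReal.zero_rpow_of_pos hqr0]
    have hlhs : eLpNorm (g j) q μ ^ qr = ∑ i, ENNReal.ofReal (c j i) ^ qr * V i := by
      rw [eLpNorm_eq_lintegral_rpow_enorm_toReal hq0 hqt, ← hqrdef, my_rpow_rpow_cancel' hqr0',
        lintegral_congr (f := fun z => ‖g j z‖ₑ ^ qr) hpt,
        lintegral_finset_sum _ (fun i _ => measurable_const.indicator (hmeas j i))]
      exact Finset.sum_congr rfl fun i _ => by
        rw [lintegral_indicator_const (hmeas j i), hμQD]
    have hXL : ∀ i, X i ≤ L :=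
      fun i => eLpNorm_mono_measure f (Measure.restrict_mono (hQD j i) le_rfl)
    have hterm : ∀ i, ENNReal.ofReal (c j i) ^ qr * V i ≤ V i ^ e * X i ^ qr := by
      intro i
      have hVi0 : V i ≠ 0 := hV0 j i
      have hVit : V i ≠ ⊤ := hVt j i
      have h1 : ENNReal.ofReal (c j i) ≤ V i ^ (1 - α - t) * X i := by
        have hof : ENNReal.ofReal (c j i)
            = V i ^ (-t) * ENNReal.ofReal (∫ w in Q j i, |f w|) := by
          simp only [hcdef]
          rw [ENNReal.ofReal_mul (Real.rpow_nonneg ENNReal.toReal_nonneg _),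
            ← ENNReal.ofReal_rpow_of_pos (ENNReal.toReal_pos hVi0 hVit),
            ENNReal.ofReal_toReal hVit]
        have hint : ENNReal.ofReal (∫ w in Q j i, |f w|)
            ≤ eLpNorm f 1 (volume.restrict (Q j i)) := by
          rw [← Real.enorm_eq_ofReal (integral_nonneg fun w => abs_nonneg _),
            eLpNorm_one_eq_lintegral_enorm]
          refine (enorm_integral_le_lintegral_enorm _).trans (le_of_eq ?_)
          exact lintegral_congr fun w => by simp
        have hhold : eLpNorm f 1 (volume.restrict (Q j i)) ≤ X i * V i ^ (1 - α) := by
          have h := eLpNorm_le_eLpNorm_mul_rpow_measure_univ (p := 1) (q := p)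
            (μ := volume.restrict (Q j i)) hp
            (hf.1.mono_measure (Measure.restrict_mono (hQD j i) le_rfl))
          rw [Measure.restrict_apply_univ] at h
          refine h.trans (le_of_eq ?_)
          congr 1
          rw [ENNReal.toReal_one, hαdef]
          norm_num
          rfl
        calc ENNReal.ofReal (c j i) = V i ^ (-t) * ENNReal.ofReal (∫ w in Q j i, |f w|) := hof
          _ ≤ V i ^ (-t) * (X i * V i ^ (1-α)) :=
              mul_le_mul_right (hint.trans hhold) _
          _ = V i ^ (1 - α - t) * X i := by
              rw [mul_comm (X i) _, ← mul_assoc, ← ENNReal.rpow_add _ _ hVi0 hVit]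
              ring_nf
      calc ENNReal.ofReal (c j i) ^ qr * V i
          ≤ (V i ^ (1 - α - t) * X i) ^ qr * V i :=
            mul_le_mul_left (ENNReal.rpow_le_rpow h1 hqr0.le) _
        _ = V i ^ ((1-α-t)*qr) * X i ^ qr * V i := by
            rw [ENNReal.mul_rpow_of_nonneg _ _ hqr0.le, ← ENNReal.rpow_mul]
        _ = V i ^ e * X i ^ qr := by
            rw [mul_right_comm]
            congr 1
            rw [hedef, ENNReal.rpow_add _ _ hVi0 hVit, ENNReal.rpow_one]
    have hVe : ∀ i, V i ^ e ≤ K * Bj ^ e := by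
      intro i
      have hlow : ENNReal.ofReal c₁ * Bj ≤ V i := by
        have h := (hvol j i).1
        rwa [ENNReal.ofReal_mul hc₁.le] at h
      have hup : V i ≤ ENNReal.ofReal c₂ * Bj := by
        have h := (hvol j i).2
        rwa [ENNReal.ofReal_mul hc₂.le] at h
      rcases le_or_gt 0 e with he | he
      · calc V i ^ e ≤ (ENNReal.ofReal c₂ * Bj) ^ e := ENNReal.rpow_le_rpow hup he
          _ = ENNReal.ofReal c₂ ^ e * Bj ^ e := ENNReal.mul_rpow_of_nonneg _ _ he
          _ ≤ K * Bj ^ e := mul_le_mul_left le_add_self _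
      · calc V i ^ e ≤ (ENNReal.ofReal c₁ * Bj) ^ e :=
            my_rpow_le_rpow_of_nonpos hlow he.le
          _ = ENNReal.ofReal c₁ ^ e * Bj ^ e :=
            ENNReal.mul_rpow_of_ne_top ENNReal.ofReal_ne_top hBjt e
          _ ≤ K * Bj ^ e := mul_le_mul_left le_self_add _
    have hsum1 : eLpNorm (g j) q μ ^ qr ≤ K * Bj ^ e * ∑ i, X i ^ qr := by
      rw [hlhs, Finset.mul_sum]
      exact Finset.sum_le_sum fun i _ =>
        (hterm i).trans (mul_le_mul_left (hVe i) _)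
    have hXsum : ∑ i, X i ^ qr ≤ ((2^j : ℕ) : ℝ≥0∞) ^ (1 - qr*α) * L ^ qr := by
      by_cases hptop : p = ⊤
      · have hα' : α = 0 := by rw [hαdef, hptop]; simp
        calc ∑ i, X i ^ qr ≤ ∑ _i : Fin (2^j), L ^ qr :=
              Finset.sum_le_sum fun i _ => ENNReal.rpow_le_rpow (hXL i) hqr0.le
          _ = ((2^j : ℕ) : ℝ≥0∞) ^ (1 - qr*α) * L ^ qr := by
              rw [Finset.sum_const, Finset.card_univ, Fintype.card_fin, hα']
              simp [nsmul_eq_mul]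
      · set pr : ℝ := p.toReal with hprdef
        have hpr0 : 0 < pr := ENNReal.toReal_pos hp0 hptop
        have hqrpr : qr < pr := by
          have h1 : 1/pr < 1/qr := by
            rw [one_div, ← hαdef]
            linarith [hkey]
          exact lt_of_one_div_lt_one_div hpr0 h1
        set r : ℝ := pr / qr with hrdef
        have hr1 : 1 < r := (one_lt_div hqr0).mpr hqrpr
        have hr0 : r ≠ 0 := by positivity
        have hr10 : r - 1 ≠ 0 := sub_ne_zero.mpr hr1.ne'
        have hconj : r.HolderConjugate (r/(r-1)) :=
          (Real.holderConjugate_iff_eq_conjExponent hr1).mpr rfl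
        have hhold := ENNReal.inner_le_Lp_mul_Lq (s := Finset.univ)
          (f := fun i : Fin (2^j) => X i ^ qr) (g := fun _ => (1:ℝ≥0∞)) hconj
        simp only [mul_one, ENNReal.one_rpow] at hhold
        have hXpr : ∀ i : Fin (2^j), (X i ^ qr) ^ r = X i ^ pr := by
          intro i
          rw [← ENNReal.rpow_mul]
          refine congrArg (fun x : ℝ => X i ^ x) ?_
          rw [hrdef]
          field_simp
        have hsumpr : ∑ i, X i ^ pr ≤ L ^ pr := by
          have hXi : ∀ i : Fin (2^j), X i ^ pr
              = ∫⁻ z in Q j i, (‖f z‖₊ : ℝ≥0∞) ^ pr ∂volume := by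
            intro i
            rw [hXdef]
            simp only []
            rw [eLpNorm_eq_lintegral_rpow_enorm_toReal hp0 hptop, ← hprdef,
              my_rpow_rpow_cancel' hpr0.ne']
            rfl
          have hL : L ^ pr = ∫⁻ z in D, (‖f z‖₊:ℝ≥0∞) ^ pr ∂volume := by
            rw [hLdef, hμ, eLpNorm_eq_lintegral_rpow_enorm_toReal hp0 hptop, ← hprdef,
              my_rpow_rpow_cancel' hpr0.ne']
            rfl
          rw [hL]
          simp_rw [hXi]
          rw [← tsum_fintype (L := SummationFilter.unconditional _), ← lintegral_iUnion (hmeas j) (hdisj j)]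
          refine lintegral_mono_set ?_
          rw [hunion j]
          intro z hz
          exact hz.2
        calc ∑ i, X i ^ qr
            ≤ (∑ i, (X i ^ qr) ^ r) ^ (1/r)
              * (∑ _i : Fin (2^j), (1:ℝ≥0∞)) ^ (1/(r/(r-1))) := hhold
          _ ≤ (L ^ pr) ^ (1/r) * ((2^j : ℕ) : ℝ≥0∞) ^ (1 - qr*α) := by
              refine mul_le_mul' (ENNReal.rpow_le_rpow ?_ (by positivity)) (le_of_eq ?_)
              · calc ∑ i, (X i ^ qr) ^ r = ∑ i, X i ^ pr :=
                    Finset.sum_congr rfl fun i _ => hXpr i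
                  _ ≤ L ^ pr := hsumpr
              · rw [Finset.sum_const, Finset.card_univ, Fintype.card_fin]
                simp only [nsmul_eq_mul, mul_one]
                refine congrArg (fun x : ℝ => (((2^j : ℕ) : ℝ≥0∞)) ^ x) ?_
                rw [hαdef, hrdef, one_div_div]
                field_simp
          _ = ((2^j : ℕ) : ℝ≥0∞) ^ (1 - qr*α) * L ^ qr := by
              have hprr : pr * (1/r) = qr := by
                rw [hrdef]
                field_simp
              rw [← ENNReal.rpow_mul, hprr, mul_comm]
    have hfinal : eLpNorm (g j) q μ ^ qr
        ≤ K * ((2:ℝ≥0∞) ^ ((j:ℝ)*(γ*qr))) * L ^ qr := by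
      refine hsum1.trans ?_
      calc K * Bj ^ e * ∑ i, X i ^ qr
          ≤ K * Bj ^ e * (((2^j : ℕ) : ℝ≥0∞) ^ (1 - qr*α) * L ^ qr) :=
            mul_le_mul_right hXsum _
        _ = K * (Bj ^ e * ((2^j : ℕ) : ℝ≥0∞) ^ (1 - qr*α)) * L ^ qr := by ring
        _ = K * ((2:ℝ≥0∞) ^ ((j:ℝ)*(γ*qr))) * L ^ qr := by
            congr 2
            have hBj2 : Bj = (2:ℝ≥0∞) ^ (-2*(j:ℝ)) := by
              rw [hBjdef, ← ENNReal.ofReal_rpow_of_pos two_pos]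
              norm_num
            have hN2 : ((2^j : ℕ) : ℝ≥0∞) = (2:ℝ≥0∞) ^ ((j:ℕ):ℝ) := by
              rw [ENNReal.rpow_natCast]
              norm_num
            rw [hBj2, hN2, ← ENNReal.rpow_mul, ← ENNReal.rpow_mul,
              ← ENNReal.rpow_add _ _ two_ne_zero ENNReal.ofNat_ne_top]
            congr 1
            rw [hedef, hγdef]
            field_simp
            ring
    have h2 := ENNReal.rpow_le_rpow hfinal (le_of_lt (by positivity : (0:ℝ) < 1/qr))
    rw [my_rpow_rpow_cancel hqr0'] at h2
    refine h2.trans (le_of_eq ?_)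
    rw [ENNReal.mul_rpow_of_nonneg _ _ (by positivity : (0:ℝ) ≤ 1/qr),
      ENNReal.mul_rpow_of_nonneg _ _ (by positivity : (0:ℝ) ≤ 1/qr),
      my_rpow_rpow_cancel hqr0']
    congr 1
    rw [hρdef, ← ENNReal.rpow_natCast ((2:ℝ≥0∞) ^ γ) j, ← ENNReal.rpow_mul, ← ENNReal.rpow_mul]
    rw [hKrdef]
    refine congrArg (fun x : ℝ≥0∞ => K ^ (1/qr) * x) (congrArg (fun x : ℝ => (2:ℝ≥0∞) ^ x) ?_)
    have hqq : qr * (1/qr) = 1 := mul_one_div_cancel hqr0'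
    calc (j:ℝ) * (γ * qr) * (1/qr) = γ * (j:ℝ) * (qr * (1/qr)) := by ring
      _ = γ * (j:ℝ) := by rw [hqq, mul_one]
  -- STEP 1
  have step1 : eLpNorm (fun z => ∑' j, g j z) q μ ≤ ∑' j, eLpNorm (g j) q μ := by
    set R : ℝ≥0∞ := ∑' j, eLpNorm (g j) q μ with hRdef
    set φ : ℕ → ℂ → ℝ≥0∞ :=
      fun N z => ENNReal.ofReal (∑ j ∈ Finset.range N, g j z) ^ qr with hφdef
    have hφmeas : ∀ N, Measurable (φ N) := fun N =>
      (ENNReal.continuous_rpow_const.measurable).comp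
        ((Finset.measurable_sum _ fun j _ => hgmeas j).ennreal_ofReal)
    have hφmono : Monotone φ := by
      intro N M hNM
      intro z
      refine ENNReal.rpow_le_rpow (ENNReal.ofReal_le_ofReal ?_) hqr0.le
      exact Finset.sum_le_sum_of_subset_of_nonneg (Finset.range_subset_range.mpr hNM)
        (fun i _ _ => hg0 i z)
    have hpt2 : ∀ z, (‖∑' j, g j z‖₊ : ℝ≥0∞) ^ qr ≤ ⨆ N, φ N z := by
      intro z
      rw [← enorm_eq_nnnorm, Real.enorm_eq_ofReal (tsum_nonneg fun j => hg0 j z)]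
      by_cases hs : Summable fun j => g j z
      · have htend : Filter.Tendsto (fun N => φ N z) Filter.atTop
            (nhds (ENNReal.ofReal (∑' j, g j z) ^ qr)) :=
          (ENNReal.continuous_rpow_const.tendsto _).comp
            (ENNReal.tendsto_ofReal hs.hasSum.tendsto_sum_nat)
        exact le_of_tendsto htend (Filter.Eventually.of_forall fun N =>
          le_iSup (fun N => φ N z) N)
      · rw [tsum_eq_zero_of_not_summable hs]
        simp [ENNReal.zero_rpow_of_pos hqr0]
    have key : eLpNorm (fun z => ∑' j, g j z) q μ ^ qr ≤ R ^ qr := by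
      rw [eLpNorm_eq_lintegral_rpow_enorm_toReal hq0 hqt, ← hqrdef, my_rpow_rpow_cancel' hqr0']
      calc ∫⁻ z, (‖∑' j, g j z‖₊:ℝ≥0∞) ^ qr ∂μ
          ≤ ∫⁻ z, ⨆ N, φ N z ∂μ := lintegral_mono hpt2
        _ = ⨆ N, ∫⁻ z, φ N z ∂μ := lintegral_iSup hφmeas hφmono
        _ ≤ R ^ qr := by
            refine iSup_le fun N => ?_
            have h1 : ∫⁻ z, φ N z ∂μ
                = eLpNorm (fun z => ∑ j ∈ Finset.range N, g j z) q μ ^ qr := by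
              rw [eLpNorm_eq_lintegral_rpow_enorm_toReal hq0 hqt, ← hqrdef,
                my_rpow_rpow_cancel' hqr0']
              refine lintegral_congr fun z => ?_
              rw [hφdef]
              rw [Real.enorm_eq_ofReal (Finset.sum_nonneg fun j _ => hg0 j z)]
            rw [h1]
            refine ENNReal.rpow_le_rpow ?_ hqr0.le
            refine le_trans ?_ (ENNReal.sum_le_tsum (Finset.range N))
            have h2 := eLpNorm_sum_le (μ := μ) (s := Finset.range N) (f := g)
              (fun j _ => (hgmeas j).aestronglyMeasurable) hq
            refine le_trans (le_of_eq ?_) h2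
            congr 1
            funext z
            simp
    have h3 := ENNReal.rpow_le_rpow key (le_of_lt (by positivity : (0:ℝ) < 1/qr))
    rwa [my_rpow_rpow_cancel hqr0', my_rpow_rpow_cancel hqr0'] at h3
  show eLpNorm (fun z => ∑' j, g j z) q μ ≤ C' * L
  calc eLpNorm (fun z => ∑' j, g j z) q μ ≤ ∑' j, eLpNorm (g j) q μ := step1
    _ ≤ ∑' j, Kr * ρ ^ j * L := ENNReal.tsum_le_tsum step2
    _ = Kr * (1 - ρ)⁻¹ * L := by
        simp_rw [mul_assoc]
        rw [ENNReal.tsum_mul_left, ENNReal.tsum_mul_right, ENNReal.tsum_geometric]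
    _ = C' * L := by rw [hC'def]
end
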